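/- Let d ≤ −1 be a real number and let e ≥ ½d² − (3/2)d + 2/3. Then (24d³ − 12d² + 108de + 81e² − 48e)/(6d − 4)² + 3d/8 − 1/4 ≥ d²(81d² − 120d + 45)/(12d − 8)² > 0. -/

import Mathlib

theorem stmt_14 (d e : ℝ) (hd : d ≤ -1) (he : e ≥ 1/2 * d ^ 2 - 3/2 * d + 2/3) :
    (24 * d ^ 3 - 12 * d ^ 2 + 108 * d * e + 81 * e ^ 2 - 48 * e) / (6 * d - 4) ^ 2
        + 3 * d / 8 - 1/4
      ≥ d ^ 2 * (81 * d ^ 2 - 120 * d + 45) / (12 * d - 8) ^ 2 ∧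
    d ^ 2 * (81 * d ^ 2 - 120 * d + 45) / (12 * d - 8) ^ 2 > 0 := by
  have h6 : 6 * d - 4 < 0 := by linarith
  have h6' : (6 * d - 4) ≠ 0 := ne_of_lt h6
  have h12' : (12 * d - 8) ≠ 0 := by intro h; linarith
  constructor
  · rw [ge_iff_le, ← sub_nonneg]
    have heq : (24 * d ^ 3 - 12 * d ^ 2 + 108 * d * e + 81 * e ^ 2 - 48 * e) / (6 * d - 4) ^ 2
        + 3 * d / 8 - 1/4 - d ^ 2 * (81 * d ^ 2 - 120 * d + 45) / (12 * d - 8) ^ 2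
        = (8 * (24 * d ^ 3 - 12 * d ^ 2 + 108 * d * e + 81 * e ^ 2 - 48 * e)
            + (3 * d - 2) * (6 * d - 4) ^ 2
            - 2 * d ^ 2 * (81 * d ^ 2 - 120 * d + 45)) / (8 * (6 * d - 4) ^ 2) := by
      have hq : (12 * d - 8) = 2 * (6 * d - 4) := by ring
      generalize 6 * d - 4 = q at *
      generalize 12 * d - 8 = r at *
      subst hq
      field_simp
      ring
    rw [heq]
    apply div_nonneg _ (by positivity)
    nlinarith [sq_nonneg (e - (1/2 * d ^ 2 - 3/2 * d + 2/3)),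
      mul_nonneg (by linarith : (0:ℝ) ≤ e - (1/2 * d ^ 2 - 3/2 * d + 2/3))
        (by nlinarith : (0:ℝ) ≤ 81 * d ^ 2 - 135 * d + 60),
      sq_nonneg d, sq_nonneg (d + 1)]
  · apply div_pos
    · apply mul_pos (by nlinarith : (0:ℝ) < d ^ 2)
      nlinarith [sq_nonneg (9 * d - 7)]
    · positivity
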